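/- arXiv:2109.09867 — 5 statements merged into one kernel-verified Lean document; each statement's English description precedes it below -/
import Mathlib

section
/- Let A be a unital Banach algebra and let α be a norm on A ⊗ M_n(ℂ) making it a unital Banach algebra. If there exists a constant C > 0 such that α(a ⊗ E₁₁) ≤ C‖a‖ for all a ∈ A, then the identity map from (A ⊗ M_n(ℂ), ‖·‖₁) to (A ⊗ M_n(ℂ), α) is a Banach algebra isomorphism (i.e., the two norms are equivalent). -/
open scoped BigOperators

/-- the `ℓ¹`-norm `‖Σ a_ij ⊗ E_ij‖₁ = Σ ‖a_ij‖` on `A ⊗ M_n(ℂ)` -/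
noncomputable def l1MatNorm {n : ℕ} {A : Type*} [NormedRing A]
    (x : Matrix (Fin n) (Fin n) A) : ℝ :=
  ∑ i, ∑ j, ‖x i j‖

/-- `ν` is a norm on `A ⊗ M_n(ℂ)` making it a unital Banach algebra. -/
structure IsBanachAlgebraNorm (n : ℕ) (A : Type*) [NormedRing A] [NormedAlgebra ℂ A]
    (ν : Matrix (Fin n) (Fin n) A → ℝ) : Prop where
  nonneg : ∀ x, 0 ≤ ν x
  eq_zero_iff : ∀ x, ν x = 0 ↔ x = 0
  add_le : ∀ x y, ν (x + y) ≤ ν x + ν y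
  smul_eq : ∀ (c : ℂ) (x), ν (c • x) = ‖c‖ * ν x
  mul_le : ∀ x y, ν (x * y) ≤ ν x * ν y
  complete : ∀ u : ℕ → Matrix (Fin n) (Fin n) A,
    (∀ ε : ℝ, 0 < ε → ∃ N, ∀ m ≥ N, ∀ k ≥ N, ν (u m - u k) < ε) →
    ∃ x, ∀ ε : ℝ, 0 < ε → ∃ N, ∀ m ≥ N, ν (u m - x) < ε

/-- Type copy of matrices, to carry the `ν`-norm. -/
def MatCopy (n : ℕ) (A : Type*) : Type _ := Matrix (Fin n) (Fin n) A

instance {n : ℕ} {A : Type*} [NormedRing A] : AddCommGroup (MatCopy n A) :=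
  inferInstanceAs (AddCommGroup (Matrix (Fin n) (Fin n) A))

noncomputable instance {n : ℕ} {A : Type*} [NormedRing A] [NormedAlgebra ℂ A] : Module ℂ (MatCopy n A) :=
  inferInstanceAs (Module ℂ (Matrix (Fin n) (Fin n) A))

lemma nu_sum_le {n : ℕ} {A : Type*} [NormedRing A] [NormedAlgebra ℂ A]
    {ν : Matrix (Fin n) (Fin n) A → ℝ} (hν : IsBanachAlgebraNorm n A ν)
    {ι : Type*} (s : Finset ι) (f : ι → Matrix (Fin n) (Fin n) A) :
    ν (∑ i ∈ s, f i) ≤ ∑ i ∈ s, ν (f i) := by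
  classical
  induction s using Finset.induction with
  | empty => simp [le_of_eq ((hν.eq_zero_iff 0).mpr rfl)]
  | insert a s h ih =>
    rw [Finset.sum_insert h, Finset.sum_insert h]
    exact (hν.add_le _ _).trans (by linarith)

/-- If `α` is a Banach algebra norm on `A ⊗ M_n(ℂ)` with
`α(a ⊗ E₁₁) ≤ C ‖a‖`, then the identity map `(A ⊗ M_n(ℂ), ‖·‖₁) → (A ⊗ M_n(ℂ), α)` is a
Banach algebra isomorphism, i.e. the two norms are equivalent. -/
theorem stmt0 {n : ℕ} [NeZero n] {A : Type*} [NormedRing A] [NormedAlgebra ℂ A]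
    [CompleteSpace A] (ν : Matrix (Fin n) (Fin n) A → ℝ)
    (hν : IsBanachAlgebraNorm n A ν) (C : ℝ) (hC : 0 < C)
    (hbound : ∀ a : A, ν (Matrix.single 0 0 a) ≤ C * ‖a‖) :
    ∃ K L : ℝ, 0 < K ∧ 0 < L ∧ ∀ x : Matrix (Fin n) (Fin n) A,
      K * l1MatNorm x ≤ ν x ∧ ν x ≤ L * l1MatNorm x := by
  classical
  -- constants
  set c : Fin n → ℝ := fun i => ν (Matrix.single i (0 : Fin n) (1 : A)) with hc
  set d : Fin n → ℝ := fun j => ν (Matrix.single (0 : Fin n) j (1 : A)) with hd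
  set S1 : ℝ := (∑ i, c i) + 1 with hS1def
  set S2 : ℝ := (∑ j, d j) + 1 with hS2def
  have hcnn : ∀ i, 0 ≤ c i := fun i => hν.nonneg _
  have hdnn : ∀ j, 0 ≤ d j := fun j => hν.nonneg _
  have hS1pos : 0 < S1 := by
    have : (0:ℝ) ≤ ∑ i, c i := Finset.sum_nonneg fun i _ => hcnn i
    linarith
  have hS2pos : 0 < S2 := by
    have : (0:ℝ) ≤ ∑ j, d j := Finset.sum_nonneg fun j _ => hdnn j
    linarith
  have hci : ∀ i, c i ≤ S1 := fun i => by
    have := Finset.single_le_sum (f := c) (fun i _ => hcnn i) (Finset.mem_univ i)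
    linarith
  have hdj : ∀ j, d j ≤ S2 := fun j => by
    have := Finset.single_le_sum (f := d) (fun j _ => hdnn j) (Finset.mem_univ j)
    linarith
  set L : ℝ := C * S1 * S2 with hLdef
  have hLpos : 0 < L := by positivity
  -- entrywise bound
  have hdecomp : ∀ (i j : Fin n) (a : A), Matrix.single i j a =
      Matrix.single i (0 : Fin n) (1 : A) *
        Matrix.single (0 : Fin n) (0 : Fin n) a *
        Matrix.single (0 : Fin n) j (1 : A) := by
    intro i j a
    rw [Matrix.single_mul_single_same, Matrix.single_mul_single_same, one_mul, mul_one]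
  have hEntry : ∀ (i j : Fin n) (a : A), ν (Matrix.single i j a) ≤ L * ‖a‖ := by
    intro i j a
    have h1 : ν (Matrix.single i j a) ≤
        c i * ν (Matrix.single (0 : Fin n) (0 : Fin n) a) * d j := by
      rw [hdecomp i j a]
      refine (hν.mul_le _ _).trans ?_
      exact mul_le_mul_of_nonneg_right (hν.mul_le _ _) (hdnn j)
    have h2 : c i * ν (Matrix.single (0 : Fin n) (0 : Fin n) a) * d j ≤
        c i * (C * ‖a‖) * d j := by
      refine mul_le_mul_of_nonneg_right ?_ (hdnn j)
      exact mul_le_mul_of_nonneg_left (hbound a) (hcnn i)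
    have h3 : c i * (C * ‖a‖) * d j ≤ S1 * (C * ‖a‖) * d j := by
      refine mul_le_mul_of_nonneg_right ?_ (hdnn j)
      exact mul_le_mul_of_nonneg_right (hci i) (by positivity)
    have h4 : S1 * (C * ‖a‖) * d j ≤ S1 * (C * ‖a‖) * S2 := by
      refine mul_le_mul_of_nonneg_left (hdj j) (by positivity)
    have h5 : S1 * (C * ‖a‖) * S2 = L * ‖a‖ := by ring
    linarith
  -- upper bound ν ≤ L * l1
  have hupper : ∀ x : Matrix (Fin n) (Fin n) A, ν x ≤ L * l1MatNorm x := by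
    intro x
    calc ν x = ν (∑ i, ∑ j, Matrix.single i j (x i j)) := by
          rw [← Matrix.matrix_eq_sum_single]
      _ ≤ ∑ i, ∑ j, ν (Matrix.single i j (x i j)) :=
          (nu_sum_le hν _ _).trans (Finset.sum_le_sum fun i _ => nu_sum_le hν _ _)
      _ ≤ ∑ i, ∑ j, L * ‖x i j‖ :=
          Finset.sum_le_sum fun i _ => Finset.sum_le_sum fun j _ => hEntry i j (x i j)
      _ = L * l1MatNorm x := by
          rw [l1MatNorm, Finset.mul_sum]
          exact Finset.sum_congr rfl fun i _ => (Finset.mul_sum _ _ _).symm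
  -- norm structure from ν
  letI : NormedAddCommGroup (MatCopy n A) := AddGroupNorm.toNormedAddCommGroup
    { toFun := ν
      map_zero' := (hν.eq_zero_iff 0).mpr rfl
      add_le' := hν.add_le
      neg' := fun x => by
        have h := hν.smul_eq (-1) x
        have e : ν ((-1 : ℂ) • x) = ν (-x) := congrArg ν (neg_one_smul ℂ x)
        exact e.symm.trans (h.trans (by simp))
      eq_zero_of_map_eq_zero' := fun x hx => (hν.eq_zero_iff x).mp hx }
  letI : NormedSpace ℂ (MatCopy n A) := ⟨fun c x => le_of_eq (hν.smul_eq c x)⟩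
  letI : CompleteSpace (MatCopy n A) := Metric.complete_of_cauchySeq_tendsto (by
    intro u hu
    obtain ⟨x, hx⟩ := hν.complete u (fun ε hε => by
      obtain ⟨N, hN⟩ := Metric.cauchySeq_iff.mp hu ε hε
      refine ⟨N, fun m hm k hk => ?_⟩
      have := hN m hm k hk
      rw [dist_eq_norm] at this
      exact this)
    refine ⟨x, Metric.tendsto_atTop.mpr fun ε hε => ?_⟩
    obtain ⟨N, hN⟩ := hx ε hε
    refine ⟨N, fun m hm => ?_⟩
    have := hN m hm
    exact (dist_eq_norm (E := MatCopy n A) (u m) x).le.trans_lt this)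
  -- sup norm structure on matrices
  letI mN : NormedAddCommGroup (Matrix (Fin n) (Fin n) A) := Matrix.normedAddCommGroup
  letI : NormedSpace ℂ (Matrix (Fin n) (Fin n) A) := Matrix.normedSpace
  letI : @CompleteSpace (Matrix (Fin n) (Fin n) A)
      (PseudoMetricSpace.toUniformSpace (α := Matrix (Fin n) (Fin n) A)) :=
    inferInstanceAs (CompleteSpace (Fin n → Fin n → A))
  have hn : 0 < (n : ℝ) := by exact_mod_cast Nat.pos_of_ne_zero (NeZero.ne n)
  -- l1 vs sup norm
  have hl1sup : ∀ x : Matrix (Fin n) (Fin n) A, l1MatNorm x ≤ (n : ℝ)^2 * ‖x‖ := by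
    intro x
    have : l1MatNorm x ≤ ∑ _i : Fin n, ∑ _j : Fin n, ‖x‖ :=
      Finset.sum_le_sum fun i _ => Finset.sum_le_sum fun j _ =>
        Matrix.norm_entry_le_entrywise_sup_norm x
    simpa [Finset.sum_const, sq, mul_assoc] using this
  -- the continuous linear equivalence
  let f : Matrix (Fin n) (Fin n) A →ₗ[ℂ] MatCopy n A :=
    { toFun := fun x => x, map_add' := fun _ _ => rfl, map_smul' := fun _ _ => rfl }
  have hfb : ∀ x : Matrix (Fin n) (Fin n) A, ‖f x‖ ≤ (L * (n:ℝ)^2) * ‖x‖ := by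
    intro x
    have h1 : ‖f x‖ = ν x := rfl
    have := (hupper x).trans (mul_le_mul_of_nonneg_left (hl1sup x) hLpos.le)
    rw [h1]
    calc ν x ≤ L * ((n:ℝ)^2 * ‖x‖) := this
      _ = (L * (n:ℝ)^2) * ‖x‖ := by ring
  let F : Matrix (Fin n) (Fin n) A →L[ℂ] MatCopy n A := LinearMap.mkContinuous f _ hfb
  have hker : F.ker = ⊥ := LinearMap.ker_eq_bot.mpr (fun a b h => h)
  have hrange : F.range = ⊤ := LinearMap.range_eq_top.mpr (fun y => ⟨y, rfl⟩)
  let e := ContinuousLinearEquiv.ofBijective F hker hrange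
  have hesymm : ∀ y : MatCopy n A, e.symm y = y := by
    intro y
    have : e (e.symm y) = y := e.apply_symm_apply y
    exact this
  set M : ℝ := ‖e.symm.toContinuousLinearMap‖ with hM
  have hMnn : 0 ≤ M := norm_nonneg _
  have hsup : ∀ x : Matrix (Fin n) (Fin n) A, ‖x‖ ≤ M * ν x := by
    intro x
    have := e.symm.toContinuousLinearMap.le_opNorm (x : MatCopy n A)
    rw [show (e.symm.toContinuousLinearMap (x : MatCopy n A)) = x from
      hesymm x] at this
    exact this
  -- conclude
  refine ⟨((n:ℝ)^2 * (M + 1))⁻¹, L, by positivity, hLpos, fun x => ?_⟩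
  constructor
  · rw [inv_mul_le_iff₀ (by positivity)]
    have h1 : l1MatNorm x ≤ (n:ℝ)^2 * (M * ν x) :=
      (hl1sup x).trans (mul_le_mul_of_nonneg_left (hsup x) (by positivity))
    have h2 : 0 ≤ ν x := hν.nonneg x
    nlinarith
  · exact hupper x
end

section
/- Let 1 ∈ A ⊂ B be an inclusion of unital Banach algebras, and suppose there is an A-bimodule map E : B → A of index-finite type with a quasi-basis of n pairs, i.e., there exist (u_i, v_i) ∈ B × B, i = 1,…,n, with Σ_i u_i E(v_i b) = b = Σ_i E(b u_i) v_i for all b ∈ B. Then ltsr(B) ≤ ltsr(A) + n − 1. -/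
open scoped BigOperators

/-- `Lg A n`: n-tuples generating `A` as a left ideal. -/
def Lg (A : Type*) [Ring A] (n : ℕ) : Set (Fin n → A) :=
  {v | ∃ c : Fin n → A, ∑ i, c i * v i = 1}

namespace Stmt4Aux

variable {R : Type*} [NormedRing R]

def LI {k n : ℕ} (a : Fin k → Fin n → R) : Prop :=
  ∃ c : Fin n → Fin k → R, ∀ i i', (∑ j, c i j * a j i') = if i = i' then 1 else 0

def opR {K n : ℕ} (r : Fin (K + 1) → R) (x : Fin (K + 1) → Fin n → R) :
    Fin (K + 1) → Fin n → R :=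
  fun j i => x j i + if j = 0 then ∑ l, r l * x l i else 0

def opC {K n : ℕ} (r : Fin (K + 1) → R) (x : Fin (K + 1) → Fin n → R) :
    Fin (K + 1) → Fin n → R :=
  fun j i => x j i + r j * x 0 i

def opS {k n : ℕ} (s : Fin (n + 1) → R) (x : Fin k → Fin (n + 1) → R) :
    Fin k → Fin (n + 1) → R :=
  fun j i => x j i + x j 0 * s i

lemma opR_opR_neg {K n : ℕ} (r : Fin (K + 1) → R) (hr : r 0 = 0)
    (x : Fin (K + 1) → Fin n → R) : opR r (opR (fun l => -(r l)) x) = x := by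
  funext j i
  by_cases hj : j = 0
  · subst hj
    simp [opR, mul_add, Finset.sum_add_distrib, mul_ite, mul_zero, Finset.sum_ite_eq',
      hr, neg_mul, Finset.sum_neg_distrib]
  · simp [opR, hj]

lemma opR_neg_opR {K n : ℕ} (r : Fin (K + 1) → R) (hr : r 0 = 0)
    (x : Fin (K + 1) → Fin n → R) : opR (fun l => -(r l)) (opR r x) = x := by
  funext j i
  by_cases hj : j = 0
  · subst hj
    simp [opR, mul_add, Finset.sum_add_distrib, mul_ite, mul_zero, Finset.sum_ite_eq',
      hr, neg_mul, Finset.sum_neg_distrib]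
  · simp [opR, hj]

lemma opC_opC_neg {K n : ℕ} (r : Fin (K + 1) → R) (hr : r 0 = 0)
    (x : Fin (K + 1) → Fin n → R) : opC r (opC (fun l => -(r l)) x) = x := by
  funext j i
  simp [opC, hr, mul_add, neg_mul]

lemma opC_neg_opC {K n : ℕ} (r : Fin (K + 1) → R) (hr : r 0 = 0)
    (x : Fin (K + 1) → Fin n → R) : opC (fun l => -(r l)) (opC r x) = x := by
  funext j i
  simp [opC, hr, mul_add, neg_mul]

lemma opS_opS_neg {k n : ℕ} (s : Fin (n + 1) → R) (hs : s 0 = 0)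
    (x : Fin k → Fin (n + 1) → R) : opS s (opS (fun l => -(s l)) x) = x := by
  funext j i
  simp [opS, hs, add_mul, mul_neg]

lemma opS_neg_opS {k n : ℕ} (s : Fin (n + 1) → R) (hs : s 0 = 0)
    (x : Fin k → Fin (n + 1) → R) : opS (fun l => -(s l)) (opS s x) = x := by
  funext j i
  simp [opS, hs, add_mul, mul_neg]

lemma li_opR {K n : ℕ} (r : Fin (K + 1) → R) (a : Fin (K + 1) → Fin n → R)
    (h : LI (opR r a)) : LI a := by
  obtain ⟨c, hc⟩ := h
  refine ⟨fun i j => c i j + c i 0 * r j, fun i i' => ?_⟩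
  have hthis := hc i i'
  simp only [opR, mul_add, Finset.sum_add_distrib, mul_ite, mul_zero, Finset.sum_ite_eq',
    Finset.mem_univ, if_true, Finset.mul_sum] at hthis
  rw [← hthis]
  simp only [add_mul, Finset.sum_add_distrib, mul_assoc]

lemma li_opC {K n : ℕ} (r : Fin (K + 1) → R) (a : Fin (K + 1) → Fin n → R)
    (h : LI (opC r a)) : LI a := by
  obtain ⟨c, hc⟩ := h
  refine ⟨fun i j => c i j + if j = 0 then ∑ l, c i l * r l else 0, fun i i' => ?_⟩
  have hthis := hc i i'
  simp only [opC, mul_add, Finset.sum_add_distrib] at hthis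
  rw [← hthis]
  simp only [add_mul, Finset.sum_add_distrib, ite_mul, zero_mul, Finset.sum_ite_eq',
    Finset.mem_univ, if_true, Finset.sum_mul, mul_assoc]

lemma li_opS {k n : ℕ} (s : Fin (n + 1) → R) (hs : s 0 = 0) (a : Fin k → Fin (n + 1) → R)
    (h : LI (opS s a)) : LI a := by
  obtain ⟨c, hc⟩ := h
  have hms : ∀ i i', (∑ j, c i j * a j i') + (∑ j, c i j * a j 0) * s i'
      = (if i = i' then 1 else 0) := by
    intro i i'
    have := hc i i'
    simp only [opS, mul_add, Finset.sum_add_distrib, Finset.mul_sum, mul_assoc] at this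
    rw [← this, Finset.sum_mul]
    simp only [mul_assoc]
  have hT0 : ∀ i, (∑ j, c i j * a j 0) = if i = 0 then 1 else 0 := by
    intro i
    have := hms i 0
    rwa [hs, mul_zero, add_zero] at this
  have hT : ∀ i i', (∑ j, c i j * a j i')
      = (if i = i' then 1 else 0) - (if i = 0 then 1 else 0) * s i' := by
    intro i i'
    have := hms i i'
    rw [hT0] at this
    exact eq_sub_of_add_eq this
  refine ⟨fun i j => c i j + if i = 0 then ∑ l, s l * c l j else 0, fun i i' => ?_⟩
  by_cases hi : i = 0
  · subst hi
    simp only [eq_self_iff_true, if_true]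
    have step1 : ∑ j, (c 0 j + ∑ l, s l * c l j) * a j i'
        = (∑ j, c 0 j * a j i') + ∑ l, s l * ∑ j, c l j * a j i' := by
      simp only [add_mul, Finset.sum_add_distrib, Finset.sum_mul, mul_assoc]
      congr 1
      rw [Finset.sum_comm]
      simp only [← Finset.mul_sum]
    rw [step1, hT 0 i']
    have step2 : ∑ l, s l * ∑ j, c l j * a j i'
        = ∑ l, s l * ((if l = i' then 1 else 0) - (if l = 0 then 1 else 0) * s i') := by
      refine Finset.sum_congr rfl fun l _ => ?_
      rw [hT]
    rw [step2]
    simp [mul_sub, Finset.sum_sub_distrib, mul_ite, mul_one, mul_zero, ite_mul, one_mul,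
      zero_mul, Finset.sum_ite_eq', hs]
  · simp only [if_neg hi, add_zero, hT, if_neg hi, zero_mul, sub_zero]

lemma continuous_opR {K n : ℕ} (r : Fin (K + 1) → R) :
    Continuous (opR (R := R) (K := K) (n := n) r) := by
  refine continuous_pi fun j => continuous_pi fun i => ?_
  by_cases hj : j = 0
  · subst hj
    simp only [opR, eq_self_iff_true, if_true]
    exact ((continuous_apply i).comp (continuous_apply 0)).add
      (continuous_finset_sum _ fun l _ =>
        continuous_const.mul ((continuous_apply i).comp (continuous_apply l)))
  · simp only [opR, if_neg hj, add_zero]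
    exact (continuous_apply i).comp (continuous_apply j)

lemma continuous_opC {K n : ℕ} (r : Fin (K + 1) → R) :
    Continuous (opC (R := R) (K := K) (n := n) r) := by
  refine continuous_pi fun j => continuous_pi fun i => ?_
  exact Continuous.add ((continuous_apply i).comp (continuous_apply j))
    (continuous_const.mul ((continuous_apply i).comp (continuous_apply 0)))

lemma continuous_opS {k n : ℕ} (s : Fin (n + 1) → R) :
    Continuous (opS (R := R) (k := k) (n := n) s) := by
  refine continuous_pi fun j => continuous_pi fun i => ?_
  exact Continuous.add ((continuous_apply i).comp (continuous_apply j))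
    (by fun_prop)

lemma lg_mono {m k : ℕ} (hmk : m ≤ k) (h : Dense (Lg R m)) : Dense (Lg R k) := by
  rw [Metric.dense_iff] at h ⊢
  intro x ε hε
  obtain ⟨w, hwb, c, hc⟩ := h (fun i => x (Fin.castLE hmk i)) ε hε
  refine ⟨fun i => if hi : (i : ℕ) < m then w ⟨i, hi⟩ else x i, Metric.mem_ball.mpr ?_,
    ⟨fun i => if hi : (i : ℕ) < m then c ⟨i, hi⟩ else 0, ?_⟩⟩
  · rw [dist_pi_lt_iff hε]
    intro i
    by_cases hi : (i : ℕ) < m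
    · simp only [dif_pos hi]
      have h2 : Fin.castLE hmk ⟨(i : ℕ), hi⟩ = i := Fin.val_injective rfl
      have h1 : x i = (fun i => x (Fin.castLE hmk i)) ⟨(i : ℕ), hi⟩ := by
        simp [h2]
      rw [h1]
      exact lt_of_le_of_lt (dist_le_pi_dist w (fun i => x (Fin.castLE hmk i)) ⟨i, hi⟩)
        (Metric.mem_ball.mp hwb)
    · simp [dif_neg hi, hε]
  · have e1 : ∀ i : Fin k,
        (if hi : (i : ℕ) < m then c ⟨i, hi⟩ else 0) *
          (if hi : (i : ℕ) < m then w ⟨i, hi⟩ else x i)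
        = if hi : (i : ℕ) < m then c ⟨i, hi⟩ * w ⟨i, hi⟩ else 0 := by
      intro i
      by_cases hi : (i : ℕ) < m <;> simp [hi]
    rw [Finset.sum_congr rfl (fun i _ => e1 i),
      Fin.sum_univ_eq_sum_range (fun l => if hl : l < m then c ⟨l, hl⟩ * w ⟨l, hl⟩ else 0) k,
      ← Finset.sum_subset (Finset.range_subset_range.mpr hmk)
        (fun l _ hl => dif_neg (by simpa using hl)),
      ← Fin.sum_univ_eq_sum_range (fun l => if hl : l < m then c ⟨l, hl⟩ * w ⟨l, hl⟩ else 0) m,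
      ← hc]
    refine Finset.sum_congr rfl fun i _ => ?_
    rw [dif_pos i.isLt]


lemma dense_li (m n₀ : ℕ) (hLg : Dense (Lg R m)) :
    Dense {a : Fin (m + n₀) → Fin (n₀ + 1) → R | LI a} := by
  induction n₀ with
  | zero =>
    rw [Metric.dense_iff]
    intro a ε hε
    obtain ⟨w, hwb, cw, hcw⟩ := Metric.dense_iff.mp hLg (fun j => a j 0) ε hε
    refine ⟨fun j _ => w j, Metric.mem_ball.mpr ?_, ⟨fun _ j => cw j, ?_⟩⟩
    · rw [dist_pi_lt_iff hε]
      intro j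
      rw [dist_pi_lt_iff hε]
      intro i
      have hi : i = 0 := Fin.ext (by omega)
      subst hi
      exact lt_of_le_of_lt (dist_le_pi_dist w (fun j => a j 0) j) (Metric.mem_ball.mp hwb)
    · intro i i'
      have hii : i = i' := Fin.ext (by omega)
      subst hii
      simpa using hcw
  | succ n₀ ih =>
    show Dense {a : Fin (m + n₀ + 1) → Fin (n₀ + 2) → R | LI a}
    rw [Metric.dense_iff]
    intro a ε hε
    have hε2 : 0 < ε / 2 := half_pos hε
    obtain ⟨w, hwb, cw, hcw⟩ := Metric.dense_iff.mp
      (lg_mono (Nat.le_add_right m n₀) hLg) (fun j : Fin (m + n₀) => a j.succ 0) (ε / 2) hε2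
    set a1 : Fin (m + n₀ + 1) → Fin (n₀ + 2) → R :=
      fun j i => if i = 0 then (Fin.cases (a 0 0) w j : R) else a j i with ha1def
    have ha1a : dist a1 a < ε / 2 := by
      rw [dist_pi_lt_iff hε2]
      intro j
      rw [dist_pi_lt_iff hε2]
      intro i
      by_cases hi : i = 0
      · subst hi
        cases j using Fin.cases with
        | zero =>
          simpa [ha1def] using hε2
        | succ j' =>
          have hw : a1 j'.succ 0 = w j' := by simp [ha1def]
          rw [hw]
          exact lt_of_le_of_lt (dist_le_pi_dist w (fun j : Fin (m + n₀) => a j.succ 0) j')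
            (Metric.mem_ball.mp hwb)
      · simp [ha1def, hi, hε2]
    have hu : ∑ j : Fin (m + n₀), cw j * a1 j.succ 0 = 1 := by
      simpa [ha1def] using hcw
    set r1 : Fin (m + n₀ + 1) → R := Fin.cons 0 (fun j' => (1 - a1 0 0) * cw j') with hr1def
    have hr1 : r1 0 = 0 := by simp [hr1def]
    set a2 := opR r1 a1 with ha2def
    have ha200 : a2 0 0 = 1 := by
      have : ∑ l, r1 l * a1 l 0 = (1 - a1 0 0) * ∑ j : Fin (m + n₀), cw j * a1 j.succ 0 := by
        rw [Fin.sum_univ_succ]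
        simp [hr1def, mul_assoc, Finset.mul_sum]
      rw [ha2def]
      simp only [opR, eq_self_iff_true, if_true, this, hu, mul_one]
      abel
    set r2 : Fin (m + n₀ + 1) → R := Fin.cons 0 (fun j' => -(a2 j'.succ 0)) with hr2def
    have hr2 : r2 0 = 0 := by simp [hr2def]
    set a3 := opC r2 a2 with ha3def
    have ha3succ0 : ∀ j' : Fin (m + n₀), a3 j'.succ 0 = 0 := by
      intro j'
      simp [ha3def, opC, hr2def, ha200]
    have ha30 : ∀ i : Fin (n₀ + 2), a3 0 i = a2 0 i := by
      intro i
      simp [ha3def, opC, hr2def]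
    set s3 : Fin (n₀ + 2) → R := Fin.cons 0 (fun i' => -(a3 0 i'.succ)) with hs3def
    have hs3 : s3 0 = 0 := by simp [hs3def]
    set b := opS s3 a3 with hbdef
    have hb00 : b 0 0 = 1 := by
      simp [hbdef, opS, hs3def, ha30, ha200]
    have hb0succ : ∀ i' : Fin (n₀ + 1), b 0 i'.succ = 0 := by
      intro i'
      simp [hbdef, opS, hs3def, ha30, ha200]
    have hbsucc0 : ∀ j' : Fin (m + n₀), b j'.succ 0 = 0 := by
      intro j'
      simp [hbdef, opS, hs3def, ha3succ0]
    set G : (Fin (m + n₀ + 1) → Fin (n₀ + 2) → R) → (Fin (m + n₀ + 1) → Fin (n₀ + 2) → R) :=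
      fun x => opR (fun l => -(r1 l)) (opC (fun l => -(r2 l)) (opS (fun l => -(s3 l)) x))
      with hGdef
    have hGcont : Continuous G := by
      exact (continuous_opR _).comp ((continuous_opC _).comp (continuous_opS _))
    have hGb : G b = a1 := by
      rw [hGdef]
      simp only
      rw [hbdef, opS_neg_opS s3 hs3, ha3def, opC_neg_opC r2 hr2, ha2def, opR_neg_opR r1 hr1]
    obtain ⟨δ, hδpos, hδ⟩ := Metric.continuousAt_iff.mp
      (hGcont.continuousAt (x := b)) (ε / 2) hε2
    obtain ⟨Y', hY'b, cY, hcY⟩ := Metric.dense_iff.mp ih (fun j i => b j.succ i.succ) δ hδpos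
    set b' : Fin (m + n₀ + 1) → Fin (n₀ + 2) → R :=
      fun j => (Fin.cases (Fin.cons 1 0) (fun j' => Fin.cons 0 (Y' j')) j : Fin (n₀ + 2) → R)
      with hb'def
    have hb'b : dist b' b < δ := by
      rw [dist_pi_lt_iff hδpos]
      intro j
      rw [dist_pi_lt_iff hδpos]
      intro i
      cases j using Fin.cases with
      | zero =>
        cases i using Fin.cases with
        | zero =>
          simp only [hb'def, Fin.cases_zero, Fin.cons_zero, hb00]
          simpa using hδpos
        | succ i' =>
          simp only [hb'def, Fin.cases_zero, Fin.cons_succ, hb0succ]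
          simpa using hδpos
      | succ j' =>
        cases i using Fin.cases with
        | zero =>
          simp only [hb'def, Fin.cases_succ, Fin.cons_zero, hbsucc0]
          simpa using hδpos
        | succ i' =>
          simp only [hb'def, Fin.cases_succ, Fin.cons_succ]
          calc dist (Y' j' i') (b j'.succ i'.succ)
              ≤ dist (Y' j') (fun i => b j'.succ i.succ) :=
                dist_le_pi_dist (Y' j') (fun i => b j'.succ i.succ) i'
            _ ≤ dist Y' (fun j i => b j.succ i.succ) :=
                dist_le_pi_dist Y' (fun j i => b j.succ i.succ) j'
            _ < δ := Metric.mem_ball.mp hY'b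
    have hLIb' : LI b' := by
      refine ⟨fun i => (Fin.cases (fun j => if j = 0 then 1 else 0)
        (fun i₀ => Fin.cons 0 (cY i₀)) i : Fin (m + n₀ + 1) → R), fun i i' => ?_⟩
      cases i using Fin.cases with
      | zero =>
        simp only [Fin.cases_zero]
        rw [Finset.sum_eq_single (0 : Fin (m + n₀ + 1))]
        · simp only [eq_self_iff_true, if_true, one_mul, hb'def, Fin.cases_zero]
          cases i' using Fin.cases with
          | zero => simp
          | succ i'' => simp [Fin.succ_ne_zero, (Fin.succ_ne_zero i'').symm]
        · intro j _ hj
          simp [hj]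
        · simp
      | succ i₀ =>
        simp only [Fin.cases_succ]
        rw [Fin.sum_univ_succ]
        simp only [Fin.cons_zero, Fin.cons_succ, zero_mul, zero_add]
        cases i' using Fin.cases with
        | zero => simp [hb'def, Fin.succ_ne_zero]
        | succ i₁ =>
          have hYe : ∀ j' : Fin (m + n₀), b' j'.succ i₁.succ = Y' j' i₁ := by
            intro j'
            simp [hb'def]
          simp only [hYe]
          rw [hcY i₀ i₁]
          simp [Fin.succ_inj]
    set a' := G b' with ha'def
    have hfa' : opS s3 (opC r2 (opR r1 a')) = b' := by
      rw [ha'def, hGdef]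
      simp only
      rw [opR_opR_neg r1 hr1, opC_opC_neg r2 hr2, opS_opS_neg s3 hs3]
    have hLIa' : LI a' := by
      refine li_opR r1 a' (li_opC r2 (opR r1 a') (li_opS s3 hs3 (opC r2 (opR r1 a')) ?_))
      rw [hfa']
      exact hLIb'
    have ha'a1 : dist a' a1 < ε / 2 := by
      rw [ha'def, ← hGb]
      exact hδ hb'b
    refine ⟨a', Metric.mem_ball.mpr ?_, hLIa'⟩
    calc dist a' a ≤ dist a' a1 + dist a1 a := dist_triangle _ _ _
      _ < ε / 2 + ε / 2 := add_lt_add ha'a1 ha1a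
      _ = ε := add_halves ε

end Stmt4Aux

/-- left topological stable rank -/
noncomputable def ltsr (A : Type*) [Ring A] [TopologicalSpace A] : ℕ∞ :=
  sInf ((fun n : ℕ => (n : ℕ∞)) '' {n | Dense (Lg A n)})

open Stmt4Aux in
/-- For an inclusion `1 ∈ A ⊆ B` of unital Banach algebras with an
`A`-bimodule map `E : B → A` of index-finite type with quasi-basis `{(u_i, v_i)}_{i=1}^n`,
one has `ltsr(B) ≤ ltsr(A) + n - 1`. -/
theorem stmt4 {B : Type*} [NormedRing B] [CompleteSpace B] (A : Subring B)
    (hA : IsClosed (A : Set B)) (E : B → A) (hEcont : Continuous E)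
    (hEadd : ∀ x y : B, E (x + y) = E x + E y)
    (hEleft : ∀ (a : A) (b : B), E ((a : B) * b) = a * E b)
    (hEright : ∀ (a : A) (b : B), E (b * (a : B)) = E b * a)
    (n : ℕ) (u v : Fin n → B)
    (hquasi : ∀ b : B, (∑ i, u i * ((E (v i * b) : A) : B)) = b ∧
      (∑ i, ((E (b * u i) : A) : B) * v i) = b) :
    ltsr B ≤ ltsr A + (n : ℕ∞) - 1 := by
  by_cases htriv : (1 : B) = 0
  · have hLg0 : Lg B 0 = Set.univ := by
      refine Set.eq_univ_iff_forall.mpr fun w => ⟨0, ?_⟩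
      simpa using htriv.symm
    have h0 : ltsr B ≤ ((0 : ℕ) : ℕ∞) := by
      refine sInf_le ⟨0, ?_, rfl⟩
      rw [Set.mem_setOf_eq, hLg0]
      exact dense_univ
    have h0' : ltsr B ≤ 0 := by simpa using h0
    exact h0'.trans zero_le
  · cases n with
    | zero =>
      have h1 : (0 : B) = 1 := by simpa using (hquasi 1).1
      exact absurd h1.symm htriv
    | succ n₀ =>
      rcases Set.eq_empty_or_nonempty {q : ℕ | Dense (Lg ↥A q)} with hSA | hSA
      · have htop : ltsr A = ⊤ := by
          unfold ltsr
          rw [hSA, Set.image_empty, sInf_empty]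
        rw [htop, top_add]
        exact le_top.trans_eq (ENat.top_sub_coe (n₀ + 1)).symm
      · set m := sInf {q : ℕ | Dense (Lg ↥A q)} with hmdef
        have hm : Dense (Lg ↥A m) := Nat.sInf_mem hSA
        have hmA : (m : ℕ∞) ≤ ltsr A := by
          refine le_sInf fun x hx => ?_
          obtain ⟨q, hq, rfl⟩ := hx
          show (m : ℕ∞) ≤ (q : ℕ∞)
          exact_mod_cast Nat.sInf_le hq
        have hDB : Dense (Lg B (m + n₀)) := by
          rw [Metric.dense_iff]
          intro β ε hε
          set V : ℝ := ∑ i, ‖v i‖ with hV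
          have hV0 : 0 ≤ V := Finset.sum_nonneg fun _ _ => norm_nonneg _
          set δ := ε / (V + 1) with hδdef
          have hδ : 0 < δ := by positivity
          obtain ⟨a', ha'b, c, hc⟩ := Metric.dense_iff.mp (dense_li m n₀ hm)
            (fun j i => E (β j * u i)) δ hδ
          set β' : Fin (m + n₀) → B := fun j => ∑ i, ((a' j i : B)) * v i with hβ'def
          have hent : ∀ j i, ‖((a' j i : B)) - ((E (β j * u i) : B))‖ < δ := by
            intro j i
            have h1 : dist (a' j i) ((fun j i => E (β j * u i)) j i) < δ :=
              lt_of_le_of_lt (le_trans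
                (dist_le_pi_dist (a' j) ((fun j i => E (β j * u i)) j) i)
                (dist_le_pi_dist a' (fun j i => E (β j * u i)) j))
                (Metric.mem_ball.mp ha'b)
            rw [Subtype.dist_eq, dist_eq_norm] at h1
            exact h1
          refine ⟨β', Metric.mem_ball.mpr ?_, ?_⟩
          · rw [dist_pi_lt_iff hε]
            intro j
            have hβj : β j = ∑ i, ((E (β j * u i) : B)) * v i := ((hquasi (β j)).2).symm
            rw [dist_eq_norm]
            have hsub : β' j - β j
                = ∑ i, (((a' j i : B)) - ((E (β j * u i) : B))) * v i := by
              conv_lhs => rw [hβ'def, hβj]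
              rw [← Finset.sum_sub_distrib]
              exact Finset.sum_congr rfl fun i _ => (sub_mul _ _ _).symm
            rw [hsub]
            calc ‖∑ i, (((a' j i : B)) - ((E (β j * u i) : B))) * v i‖
                ≤ ∑ i, ‖(((a' j i : B)) - ((E (β j * u i) : B))) * v i‖ := norm_sum_le _ _
              _ ≤ ∑ i, δ * ‖v i‖ := by
                  refine Finset.sum_le_sum fun i _ => ?_
                  exact le_trans (norm_mul_le _ _)
                    (mul_le_mul_of_nonneg_right (le_of_lt (hent j i)) (norm_nonneg _))
              _ = δ * V := by rw [← Finset.mul_sum]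
              _ < δ * (V + 1) := (mul_lt_mul_iff_right₀ hδ).mpr (lt_add_one V)
              _ = ε := by
                  rw [hδdef]
                  field_simp
          · refine ⟨fun j => ∑ i, ((E (u i) : B)) * ((c i j : B)), ?_⟩
            have coe_sum : ∀ i i', ((∑ j, c i j * a' j i' : ↥A) : B)
                = ∑ j, (c i j : B) * (a' j i' : B) := by
              intro i i'
              push_cast
              rfl
            calc ∑ j, (∑ i, (E (u i) : B) * (c i j : B)) * β' j
                = ∑ j, ∑ i, ∑ i', (E (u i) : B) * (c i j : B) * ((a' j i' : B) * v i') := by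
                  refine Finset.sum_congr rfl fun j _ => ?_
                  rw [hβ'def, Finset.sum_mul]
                  refine Finset.sum_congr rfl fun i _ => ?_
                  rw [Finset.mul_sum]
              _ = ∑ i, ∑ i', (E (u i) : B) * ((∑ j, c i j * a' j i' : ↥A) : B) * v i' := by
                  rw [Finset.sum_comm]
                  refine Finset.sum_congr rfl fun i _ => ?_
                  rw [Finset.sum_comm]
                  refine Finset.sum_congr rfl fun i' _ => ?_
                  rw [coe_sum, Finset.mul_sum, Finset.sum_mul]
                  refine Finset.sum_congr rfl fun j _ => ?_
                  noncomm_ring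
              _ = ∑ i, (E (u i) : B) * v i := by
                  refine Finset.sum_congr rfl fun i _ => ?_
                  simp only [hc]
                  simp [apply_ite ((fun x : ↥A => (x : B))), mul_ite, ite_mul, mul_one,
                    mul_zero, zero_mul, Finset.sum_ite_eq']
              _ = 1 := by simpa using (hquasi 1).2
        have hstep : ltsr B ≤ ((m + n₀ : ℕ) : ℕ∞) := sInf_le ⟨m + n₀, hDB, rfl⟩
        refine hstep.trans
          ((ENat.addLECancellable_of_ne_top (by simp)).le_tsub_of_add_le_right ?_)
        have hcast : ((m + n₀ : ℕ) : ℕ∞) + 1 = (m : ℕ∞) + (((n₀ + 1 : ℕ)) : ℕ∞) := by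
          push_cast
          rw [add_assoc]
        rw [hcast]
        exact add_le_add hmA le_rfl
end

section
/- Let G be a discrete group, A a unital Banach algebra, α an action of G on A, and E : ℓ¹(G, A, α) → A the canonical map E(Σ f_g δ^g) = f_e. Set u_g = δ^g and v_g = δ^{g⁻¹}. Then for any finitely supported b = Σ_g b_g δ^g in ℓ¹(G, A, α), one has b = Σ_g u_g * E(v_g * b) = Σ_g E(b * u_g) * v_g. In particular, if G is finite, {(u_g, v_g)}_{g∈G} is a quasi-basis for E and Index E = Σ_g u_g * v_g = |G| δ^e. -/
open scoped BigOperators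

/-- twisted convolution product of the `ℓ¹`-crossed product -/
noncomputable def conv {G : Type*} [Group G] {A : Type*} [NormedRing A]
    (α : G →* RingAut A) (f₁ f₂ : G → A) : G → A :=
  fun g => ∑' h, f₁ h * α h (f₂ (h⁻¹ * g))

/-- the point mass `δ^g` -/
def deltaFn (G : Type*) [Group G] [DecidableEq G] (A : Type*) [NormedRing A] (g : G) :
    G → A :=
  fun h => if h = g then 1 else 0

/-- the canonical conditional expectation `E(Σ f_g δ^g) = f_e δ^e` -/
def Efn (G : Type*) [Group G] [DecidableEq G] (A : Type*) [NormedRing A] :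
    (G → A) → (G → A) :=
  fun f g => if g = 1 then f 1 else 0

/-- the embedding `A ∋ a ↦ a δ^e ∈ ℓ¹(G, A, α)` -/
def aDelta (G : Type*) [Group G] [DecidableEq G] (A : Type*) [NormedRing A] (a : A) :
    G → A :=
  fun g => if g = 1 then a else 0

lemma conv_delta_left {G : Type*} [Group G] [DecidableEq G] {A : Type*} [NormedRing A]
    (α : G →* RingAut A) (g : G) (f : G → A) :
    conv α (deltaFn G A g) f = fun x => α g (f (g⁻¹ * x)) := by
  funext x
  unfold conv deltaFn
  rw [tsum_eq_single g]
  · simp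
  · intro h hne; simp [hne]

lemma conv_delta_right {G : Type*} [Group G] [DecidableEq G] {A : Type*} [NormedRing A]
    (α : G →* RingAut A) (g : G) (f : G → A) :
    conv α f (deltaFn G A g) = fun x => f (x * g⁻¹) := by
  funext x
  unfold conv deltaFn
  rw [tsum_eq_single (x * g⁻¹)]
  · have : (x * g⁻¹)⁻¹ * x = g := by group
    simp [this]
  · intro h hne
    have : ¬ (h⁻¹ * x = g) := by
      intro hh; apply hne; rw [← hh]; group
    simp [this]

lemma summand1 {G : Type*} [Group G] [DecidableEq G] {A : Type*} [NormedRing A]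
    (α : G →* RingAut A) (b : G → A) (g : G) :
    conv α (deltaFn G A g) (Efn G A (conv α (deltaFn G A g⁻¹) b)) =
      fun x => if x = g then b g else 0 := by
  rw [conv_delta_left]
  funext x
  simp only [Efn, conv_delta_left]
  by_cases hx : x = g
  · have key : (α g) ((α g)⁻¹ (b g)) = b g := (α g).apply_symm_apply _
    simp [hx, key]
  · have : ¬ (g⁻¹ * x = 1) := by
      intro h; apply hx; rw [show x = g * (g⁻¹ * x) by group, h, mul_one]
    simp [this, hx]

lemma summand2 {G : Type*} [Group G] [DecidableEq G] {A : Type*} [NormedRing A]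
    (α : G →* RingAut A) (b : G → A) (g : G) :
    conv α (Efn G A (conv α b (deltaFn G A g))) (deltaFn G A g⁻¹) =
      fun x => if x = g⁻¹ then b g⁻¹ else 0 := by
  rw [conv_delta_right]
  funext x
  simp only [Efn, conv_delta_right, inv_inv]
  by_cases hx : x = g⁻¹
  · subst hx; simp
  · have : ¬ (x * g = 1) := by
      intro h; apply hx; rw [show x = (x * g) * g⁻¹ by group, h, one_mul]
    simp [this, hx]

/-- With `u_g = δ^g`, `v_g = δ^{g⁻¹}` and
`E(Σ f_g δ^g) = f_e δ^e`, every finitely supported `b ∈ ℓ¹(G, A, α)` satisfies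
`b = Σ_g u_g * E(v_g * b) = Σ_g E(b * u_g) * v_g`; in particular for finite `G`,
`{(u_g, v_g)}` is a quasi-basis for `E` and `Index E = Σ_g u_g * v_g = |G| δ^e`. -/
theorem stmt7 {G : Type*} [Group G] [DecidableEq G] {A : Type*} [NormedRing A]
    [CompleteSpace A] (α : G →* RingAut A) (b : G → A)
    (hb : (Function.support b).Finite) :
    (∑ᶠ g : G, conv α (deltaFn G A g) (Efn G A (conv α (deltaFn G A g⁻¹) b))) = b ∧
    (∑ᶠ g : G, conv α (Efn G A (conv α b (deltaFn G A g))) (deltaFn G A g⁻¹)) = b ∧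
    (∀ (hG : Fintype G),
      (∑ g ∈ @Finset.univ G hG, conv α (deltaFn G A g) (deltaFn G A g⁻¹)) =
        fun h => if h = 1 then ((@Fintype.card G hG : ℕ) : A) else 0) := by
  refine ⟨?_, ?_, ?_⟩
  · have hsupp : (Function.support fun g : G =>
        conv α (deltaFn G A g) (Efn G A (conv α (deltaFn G A g⁻¹) b))) ⊆
        Function.support b := by
      intro g hg
      simp only [Function.mem_support, summand1] at hg ⊢
      intro h0
      apply hg; funext x; simp [h0]
    rw [finsum_eq_finset_sum_of_support_subset _
      (by simpa using hsupp : _ ⊆ (hb.toFinset : Set G))]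
    funext x
    rw [Finset.sum_apply]
    simp only [summand1, Finset.sum_ite_eq]
    by_cases h : x ∈ hb.toFinset
    · simp [h]
    · rw [if_neg h]
      have : b x = 0 := by simpa using h
      simp [this]
  · have hsupp : (Function.support fun g : G =>
        conv α (Efn G A (conv α b (deltaFn G A g))) (deltaFn G A g⁻¹)) ⊆
        (fun g : G => g⁻¹) '' Function.support b := by
      intro g hg
      simp only [Function.mem_support, summand2] at hg
      refine ⟨g⁻¹, ?_, by simp⟩
      intro h0
      apply hg; funext x; simp [h0]
    rw [finsum_eq_finset_sum_of_support_subset _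
      (by simpa using hsupp : _ ⊆ ((hb.toFinset.image (·⁻¹) : Finset G) : Set G))]
    funext x
    rw [Finset.sum_apply]
    simp only [summand2]
    rw [Finset.sum_image (by intro a _ c _ h; simpa using h)]
    simp only [inv_inv]
    rw [Finset.sum_ite_eq]
    by_cases h : x ∈ hb.toFinset
    · simp [h]
    · rw [if_neg h]
      have : b x = 0 := by simpa using h
      simp [this]
  · intro hG
    funext x
    rw [Finset.sum_apply]
    have : ∀ g : G, conv α (deltaFn G A g) (deltaFn G A g⁻¹) x =
        if x = 1 then 1 else 0 := by
      intro g
      rw [conv_delta_left]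
      simp only [deltaFn]
      by_cases hx : x = 1
      · subst hx; simp
      · have : ¬ (g⁻¹ * x = g⁻¹) := by
          intro h; apply hx
          rw [show x = g * (g⁻¹ * x) by group, h]; group
        simp [this, hx]
    simp only [this]
    by_cases hx : x = 1 <;>
      simp [hx, Finset.sum_const, Finset.card_univ, nsmul_eq_mul]
end

section
/- Let G be a finite group of order n, A a unital Banach algebra, and α an action of G on A. Then the map π : ℓ¹(G, A, α) → A ⊗ M_n(ℂ), defined by π(Σ_g f_g δ^g) = Σ_{h,g ∈ G} α^h(f_g) ⊗ e_{h, hg}, is an injective algebra homomorphism, where {e_{g,h}} are the matrix units of M_n(ℂ) indexed by G. -/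
open scoped BigOperators

/-- the regular representation `π(Σ_g f_g δ^g) = Σ_{h,g} α^h(f_g) ⊗ e_{h,hg}`,
identifying `A ⊗ M_n(ℂ)` with `G × G` matrices over `A` -/
noncomputable def piRep {G : Type*} [Group G] [Fintype G] [DecidableEq G] {A : Type*}
    [NormedRing A] (α : G →* RingAut A) (f : G → A) : Matrix G G A :=
  fun h k => α h (f (h⁻¹ * k))

/-- For a finite group `G` of order `n`, the map
`π : ℓ¹(G, A, α) → A ⊗ M_n(ℂ)`, `π(Σ_g f_g δ^g) = Σ_{h,g} α^h(f_g) ⊗ e_{h,hg}`, is an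
injective unital algebra homomorphism. -/
theorem stmt8 {G : Type*} [Group G] [Fintype G] [DecidableEq G] {A : Type*}
    [NormedRing A] [CompleteSpace A] (α : G →* RingAut A) :
    Function.Injective (piRep α) ∧
    (∀ f₁ f₂ : G → A, piRep α (conv α f₁ f₂) = piRep α f₁ * piRep α f₂) ∧
    (∀ f₁ f₂ : G → A, piRep α (f₁ + f₂) = piRep α f₁ + piRep α f₂) ∧
    piRep α (deltaFn G A 1) = 1 := by
  refine ⟨?_, ?_, ?_, ?_⟩
  · intro f₁ f₂ h
    funext g
    have := congrFun (congrFun h 1) g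
    simpa [piRep] using this
  · intro f₁ f₂
    funext h k
    simp only [piRep, conv, Matrix.mul_apply, tsum_fintype]
    rw [map_sum]
    refine Fintype.sum_equiv (Equiv.mulLeft h) _ _ fun l => ?_
    have : ∀ x, α h (α l x) = α (h * l) x := fun x => by rw [map_mul]; rfl
    rw [(α h).map_mul, this]
    simp [mul_assoc, mul_inv_rev]
  · intro f₁ f₂
    funext h k
    simp [piRep, Matrix.add_apply]
  · funext h k
    by_cases hk : h = k <;>
      simp [piRep, deltaFn, Matrix.one_apply, hk, eq_comm, inv_mul_eq_one]
end

section
/- Let A be a tsr boundedly divisible unital Banach algebra, i.e., there is a constant K > 0 such that for every positive integer m there is an integer n ≥ m and a Banach algebra D with tsr(D) ≤ K and A ≅ M_n(D). Then ltsr(A) ≤ 2. -/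
open scoped BigOperators

universe u

/-- a realization `A ≅ M_n(D)` (as Banach algebras) with `tsr(D) ≤ K` -/
structure MatrixDecomp (A : Type u) [NormedRing A] (n K : ℕ) : Type (u + 1) where
  /-- the coefficient Banach algebra -/
  D : Type u
  [instD : NormedRing D]
  [instDc : CompleteSpace D]
  /-- the algebra isomorphism `A ≅ M_n(D)` -/
  iso : A ≃+* Matrix (Fin n) (Fin n) D
  cont : Continuous iso
  cont_symm : Continuous iso.symm
  tsr_le : ltsr D ≤ (K : ℕ∞)

section Lemmas

/-- perturb a vector on the image of an embedding to get a generating certificate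
supported on the image. -/
lemma lg_embed {D : Type*} [NormedRing D] {q : ℕ} (hd : Dense (Lg D q))
    {ρ : Type} [Fintype ρ] [DecidableEq ρ] (e : Fin q ↪ ρ) (v : ρ → D)
    {r : ℝ} (hr : 0 < r) :
    ∃ v' c : ρ → D, (∀ i, i ∉ Set.range e → c i = 0) ∧
      (∀ i, i ∉ Set.range e → v' i = v i) ∧ (∑ i, c i * v' i = 1) ∧ dist v' v < r := by
  obtain ⟨u', hu'ball, c₀, hc₀⟩ := Metric.dense_iff.mp hd (fun k => v (e k)) r hr
  rw [Metric.mem_ball] at hu'ball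
  refine ⟨Function.extend e u' v, Function.extend e c₀ 0, ?_, ?_, ?_, ?_⟩
  · intro i hi
    rw [Function.extend_apply' _ _ _ (by simpa [Set.range] using hi)]
    rfl
  · intro i hi
    rw [Function.extend_apply' _ _ _ (by simpa [Set.range] using hi)]
  · have h0 : ∀ i ∈ (Finset.univ : Finset ρ), i ∉ Finset.univ.image e →
        Function.extend e c₀ 0 i * Function.extend e u' v i = 0 := by
      intro i _ hi
      have : ¬ ∃ k, e k = i := by
        intro ⟨k, hk⟩; exact hi (Finset.mem_image.mpr ⟨k, Finset.mem_univ _, hk⟩)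
      rw [Function.extend_apply' _ _ _ this, Pi.zero_apply, zero_mul]
    rw [← Finset.sum_subset (Finset.subset_univ (Finset.univ.image e)) h0,
      Finset.sum_image (fun a _ b _ hab => e.injective hab)]
    have : ∀ k, Function.extend e c₀ 0 (e k) * Function.extend e u' v (e k) = c₀ k * u' k := by
      intro k
      rw [e.injective.extend_apply, e.injective.extend_apply]
    rw [Finset.sum_congr rfl fun k _ => this k]
    exact hc₀
  · rw [dist_pi_lt_iff hr]
    intro i
    by_cases hi : ∃ k, e k = i
    · obtain ⟨k, rfl⟩ := hi
      rw [e.injective.extend_apply]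
      exact (dist_pi_lt_iff hr).mp hu'ball k
    · rw [Function.extend_apply' _ _ _ hi, dist_self]
      exact hr

lemma reduce_to_basis {D : Type*} [Ring D] {ρ : Type} [Fintype ρ] [DecidableEq ρ]
    (p : ρ) (v c : ρ → D) (hcp : c p = 0) (hsum : ∑ i, c i * v i = 1) :
    ∃ U U' : Matrix ρ ρ D, U' * U = 1 ∧ U * U' = 1 ∧
      U.mulVec v = fun i => if i = p then 1 else 0 := by
  classical
  set x : Matrix ρ ρ D := Matrix.of fun i j => if i = p then (1 - v p) * c j else 0 with hx
  set y : Matrix ρ ρ D := Matrix.of fun i j =>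
    if j = p then (if i = p then 0 else -(v i)) else 0 with hy
  have hxx : x * x = 0 := by
    ext i j
    rw [Matrix.mul_apply]
    apply Finset.sum_eq_zero
    intro k _
    by_cases hk : k = p
    · by_cases hi : i = p
      · simp [hx, hi, hk, hcp]
      · simp [hx, hi]
    · simp [hx, hk]
  have hyy : y * y = 0 := by
    ext i j
    rw [Matrix.mul_apply]
    apply Finset.sum_eq_zero
    intro k _
    by_cases hk : k = p
    · simp [hy, hk]
    · simp [hy, hk]
  refine ⟨(1 + y) * (1 + x), (1 - x) * (1 - y), ?_, ?_, ?_⟩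
  · have h1 : (1 - y) * (1 + y) = 1 := by
      have h : (1 - y) * (1 + y) = 1 + y - y - y * y := by noncomm_ring
      rw [h, hyy]; noncomm_ring
    have h2 : (1 - x) * (1 + x) = 1 := by
      have h : (1 - x) * (1 + x) = 1 + x - x - x * x := by noncomm_ring
      rw [h, hxx]; noncomm_ring
    calc (1 - x) * (1 - y) * ((1 + y) * (1 + x))
        = (1 - x) * ((1 - y) * (1 + y)) * (1 + x) := by noncomm_ring
      _ = 1 := by rw [h1, mul_one, h2]
  · have h1 : (1 + y) * (1 - y) = 1 := by
      have h : (1 + y) * (1 - y) = 1 + y - y - y * y := by noncomm_ring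
      rw [h, hyy]; noncomm_ring
    have h2 : (1 + x) * (1 - x) = 1 := by
      have h : (1 + x) * (1 - x) = 1 + x - x - x * x := by noncomm_ring
      rw [h, hxx]; noncomm_ring
    calc (1 + y) * (1 + x) * ((1 - x) * (1 - y))
        = (1 + y) * ((1 + x) * (1 - x)) * (1 - y) := by noncomm_ring
      _ = 1 := by rw [h2, mul_one, h1]
  · have hv1 : (1 + x).mulVec v = fun i => if i = p then 1 else v i := by
      funext i
      rw [Matrix.add_mulVec, Matrix.one_mulVec]
      by_cases hi : i = p
      · have hxv : x.mulVec v i = 1 - v p := by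
          simp only [Matrix.mulVec, dotProduct, hx, Matrix.of_apply, if_pos hi]
          rw [show (∑ j, (1 - v p) * c j * v j) = (1 - v p) * ∑ j, c j * v j by
            rw [Finset.mul_sum]; exact Finset.sum_congr rfl fun j _ => mul_assoc _ _ _]
          rw [hsum, mul_one]
        rw [Pi.add_apply, hxv, hi]
        simp
      · have hxv : x.mulVec v i = 0 := by
          simp only [Matrix.mulVec, dotProduct, hx, Matrix.of_apply, if_neg hi]
          simp
        rw [Pi.add_apply, hxv]
        simp [hi]
    rw [← Matrix.mulVec_mulVec, hv1]
    funext i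
    rw [Matrix.add_mulVec, Matrix.one_mulVec, Pi.add_apply]
    have hmv : y.mulVec (fun i => if i = p then 1 else v i) i
        = if i = p then 0 else -(v i) := by
      simp only [Matrix.mulVec, dotProduct, hy, Matrix.of_apply]
      rw [Finset.sum_eq_single p]
      · simp
      · intro k _ hk; simp [hk]
      · intro hk; exact absurd (Finset.mem_univ p) hk
    rw [hmv]
    by_cases hi : i = p <;> simp [hi]

lemma block_left_inv {D : Type*} [Ring D] {ρ κ : Type} [Fintype ρ] [DecidableEq ρ]
    [Fintype κ] [DecidableEq κ] (p : ρ) (j₀ : κ) (T : Matrix ρ κ D)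
    (hcol : ∀ i, T i j₀ = if i = p then 1 else 0)
    (W : Matrix {j : κ // j ≠ j₀} {i : ρ // i ≠ p} D)
    (hW : W * (T.submatrix (fun i : {i : ρ // i ≠ p} => i.val)
      (fun j : {j : κ // j ≠ j₀} => j.val)) = 1) :
    ∃ S : Matrix κ ρ D, S * T = 1 := by
  classical
  set S : Matrix κ ρ D := Matrix.of fun j i =>
    if hj : j = j₀ then
      (if hi : i = p then 1 else -(∑ j' : {j : κ // j ≠ j₀}, T p j'.val * W j' ⟨i, hi⟩))
    else
      (if hi : i = p then 0 else W ⟨j, hj⟩ ⟨i, hi⟩) with hS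
  have hSj₀p : S j₀ p = 1 := by
    rw [hS, Matrix.of_apply, dif_pos rfl, dif_pos rfl]
  have hSj₀ : ∀ i : {i : ρ // i ≠ p},
      S j₀ i.val = -(∑ j' : {j : κ // j ≠ j₀}, T p j'.val * W j' i) := by
    rintro ⟨i, hi⟩
    rw [hS, Matrix.of_apply, dif_pos rfl, dif_neg hi]
  have hSjp : ∀ j, j ≠ j₀ → S j p = 0 := by
    intro j hj
    rw [hS, Matrix.of_apply, dif_neg hj, dif_pos rfl]
  have hSji : ∀ (j) (hj : j ≠ j₀) (i : {i : ρ // i ≠ p}), S j i.val = W ⟨j, hj⟩ i := by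
    rintro j hj ⟨i, hi⟩
    rw [hS, Matrix.of_apply, dif_neg hj, dif_neg hi]
  have hsplit : ∀ f : ρ → D, (∑ i, f i) = f p + ∑ i : {i : ρ // i ≠ p}, f i.val := by
    intro f
    rw [Fintype.sum_eq_add_sum_compl p f]
    congr 1
    exact Finset.sum_subtype ({p}ᶜ) (fun x => by simp) f
  have hWB : ∀ (j' j'' : {j : κ // j ≠ j₀}),
      (∑ i' : {i : ρ // i ≠ p}, W j' i' * T i'.val j''.val)
        = if j' = j'' then 1 else 0 := by
    intro j' j''
    have h := congrFun (congrFun hW j') j''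
    rw [Matrix.mul_apply] at h
    simp only [Matrix.submatrix_apply] at h
    rw [h]
    by_cases h' : j' = j'' <;> simp [h', Matrix.one_apply]
  refine ⟨S, ?_⟩
  ext j j''
  rw [Matrix.mul_apply, hsplit (fun i => S j i * T i j'')]
  by_cases hj : j = j₀
  · rw [hj]
    by_cases hj'' : j'' = j₀
    · rw [hj'']
      rw [hSj₀p, hcol p, if_pos rfl, one_mul, Matrix.one_apply_eq,
        Finset.sum_eq_zero, add_zero]
      intro i _
      rw [hcol i.val, if_neg i.prop, mul_zero]
    · rw [hSj₀p, one_mul]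
      rw [Finset.sum_congr rfl fun (i : {i : ρ // i ≠ p}) _ => by rw [hSj₀ i]]
      rw [Finset.sum_congr rfl fun (i : {i : ρ // i ≠ p}) _ =>
        (by rw [neg_mul, Finset.sum_mul,
              Finset.sum_congr rfl fun (j' : {j : κ // j ≠ j₀}) _ => mul_assoc _ _ _] :
          (-(∑ j' : {j : κ // j ≠ j₀}, T p j'.val * W j' i)) * T i.val j''
            = -(∑ j' : {j : κ // j ≠ j₀}, T p j'.val * (W j' i * T i.val j'')))]
      rw [Finset.sum_neg_distrib, Finset.sum_comm]
      rw [Finset.sum_congr rfl fun (j' : {j : κ // j ≠ j₀}) _ => by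
        rw [← Finset.mul_sum, hWB j' ⟨j'', hj''⟩, mul_ite, mul_one, mul_zero]]
      rw [Finset.sum_ite_eq' Finset.univ (⟨j'', hj''⟩ : {j : κ // j ≠ j₀})
        (fun j' => T p j'.val), if_pos (Finset.mem_univ _)]
      rw [Matrix.one_apply_ne (fun hcon : j₀ = j'' => hj'' hcon.symm)]
      simp
  · by_cases hj'' : j'' = j₀
    · rw [hj'']
      rw [hSjp j hj, zero_mul, zero_add, Finset.sum_eq_zero,
        Matrix.one_apply_ne hj]
      intro i _
      rw [hcol i.val, if_neg i.prop, mul_zero]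
    · rw [hSjp j hj, zero_mul, zero_add]
      rw [Finset.sum_congr rfl fun (i : {i : ρ // i ≠ p}) _ => by rw [hSji j hj i]]
      rw [hWB ⟨j, hj⟩ ⟨j'', hj''⟩]
      by_cases h : j = j'' <;> simp [h, Matrix.one_apply, Subtype.ext_iff]

lemma LI_dense {D : Type*} [NormedRing D] {q : ℕ} (hq : Dense (Lg D q)) :
    ∀ (N : ℕ) (ρ κ : Type) [Fintype ρ] [DecidableEq ρ] [Fintype κ] [DecidableEq κ],
      Fintype.card κ = N → q + Fintype.card κ ≤ Fintype.card ρ →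
      Dense {T : Matrix ρ κ D | ∃ S : Matrix κ ρ D, S * T = 1} := by
  intro N
  induction N with
  | zero =>
    intro ρ κ _ _ _ _ hN hcard
    haveI : IsEmpty κ := Fintype.card_eq_zero_iff.mp hN
    haveI : Subsingleton (Matrix κ κ D) :=
      ⟨fun a b => by ext i j; exact isEmptyElim i⟩
    have huniv : {T : Matrix ρ κ D | ∃ S : Matrix κ ρ D, S * T = 1} = Set.univ := by
      ext T
      simp only [Set.mem_univ, iff_true, Set.mem_setOf_eq]
      exact ⟨0, Subsingleton.elim _ _⟩
    rw [huniv]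
    exact dense_univ
  | succ N ih =>
    intro ρ κ _ _ _ _ hN hcard
    have hκpos : 0 < Fintype.card κ := by omega
    have hρpos : 0 < Fintype.card ρ := by omega
    obtain ⟨j₀⟩ := Fintype.card_pos_iff.mp hκpos
    obtain ⟨p⟩ := Fintype.card_pos_iff.mp hρpos
    have hcardρ' : Fintype.card {i : ρ // i ≠ p} = Fintype.card ρ - 1 := by
      rw [Fintype.card_subtype_compl, Fintype.card_subtype_eq]
    have hcardκ' : Fintype.card {j : κ // j ≠ j₀} = N := by
      rw [Fintype.card_subtype_compl, Fintype.card_subtype_eq]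
      omega
    obtain ⟨emb⟩ : Nonempty (Fin q ↪ {i : ρ // i ≠ p}) := by
      rw [Function.Embedding.nonempty_iff_card_le, Fintype.card_fin, hcardρ']
      omega
    set e : Fin q ↪ ρ := emb.trans (Function.Embedding.subtype _) with he
    have hep : p ∉ Set.range e := by
      rintro ⟨k, hk⟩
      exact (emb k).prop hk
    set LI := {T : Matrix ρ κ D | ∃ S : Matrix κ ρ D, S * T = 1} with hLI
    set Cert := {T : Matrix ρ κ D | ∃ c : ρ → D, c p = 0 ∧ ∑ i, c i * T i j₀ = 1}
      with hCertdef
    have hIH : Dense {B : Matrix {i : ρ // i ≠ p} {j : κ // j ≠ j₀} D |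
        ∃ W : Matrix {j : κ // j ≠ j₀} {i : ρ // i ≠ p} D, W * B = 1} := by
      apply ih
      · exact hcardκ'
      · rw [hcardκ', hcardρ']; omega
    have hCert : Cert ⊆ closure LI := by
      rintro T₁ ⟨c, hcp, hcsum⟩
      obtain ⟨U, U', hU'U, hUU', hUv⟩ :=
        reduce_to_basis p (fun i => T₁ i j₀) c hcp hcsum
      have hT₂col : ∀ i, (U * T₁) i j₀ = if i = p then 1 else 0 := by
        intro i
        have h := congrFun hUv i
        rw [Matrix.mul_apply]
        simpa [Matrix.mulVec, dotProduct] using h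
      have hT₂mem : (U * T₁) ∈ closure LI := by
        refine (Metric.mem_closure_iff (α := ρ → κ → D)).mpr ?_
        intro δ hδ
        obtain ⟨B', hball, W, hWB'⟩ := (Metric.dense_iff
          (α := {i : ρ // i ≠ p} → {j : κ // j ≠ j₀} → D)).mp hIH
          ((U * T₁).submatrix (fun i : {i : ρ // i ≠ p} => i.val)
            (fun j : {j : κ // j ≠ j₀} => j.val)) δ hδ
        replace hball := Metric.mem_ball.mp hball
        set T₃ : Matrix ρ κ D := Matrix.of fun i j =>
          if hj : j = j₀ then (if i = p then (1:D) else 0)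
          else if hi : i = p then (U * T₁) i j else B' ⟨i, hi⟩ ⟨j, hj⟩ with hT₃
        have hT₃sub : T₃.submatrix (fun i : {i : ρ // i ≠ p} => i.val)
            (fun j : {j : κ // j ≠ j₀} => j.val) = B' := by
          ext i j
          rcases i with ⟨i, hi⟩
          rcases j with ⟨j, hj⟩
          simp only [Matrix.submatrix_apply, hT₃, Matrix.of_apply]
          rw [dif_neg hj, dif_neg hi]
        refine ⟨T₃, ?_, ?_⟩
        · exact block_left_inv p j₀ T₃
            (fun i => by rw [hT₃, Matrix.of_apply, dif_pos rfl]) W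
            (by rw [hT₃sub]; exact hWB')
        · refine (dist_pi_lt_iff hδ).mpr ?_
          intro i
          rw [dist_pi_lt_iff hδ]
          intro j
          by_cases hj : j = j₀
          · rw [hj, hT₂col i, hT₃, Matrix.of_apply, dif_pos rfl, dist_self]
            exact hδ
          · by_cases hi : i = p
            · rw [hT₃, Matrix.of_apply, dif_neg hj, dif_pos hi, dist_self]
              exact hδ
            · rw [hT₃, Matrix.of_apply, dif_neg hj, dif_neg hi]
              have h1 := (dist_pi_lt_iff hδ).mp hball (⟨i, hi⟩ : {i : ρ // i ≠ p})
              have h2 := (dist_pi_lt_iff hδ).mp h1 (⟨j, hj⟩ : {j : κ // j ≠ j₀})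
              simp only [Matrix.submatrix_apply] at h2
              rw [dist_comm] at h2
              exact h2
      have hT₁eq : T₁ = U' * (U * T₁) := by
        rw [← Matrix.mul_assoc, hU'U, Matrix.one_mul]
      have himg : (fun X : Matrix ρ κ D => U' * X) '' LI ⊆ LI := by
        rintro _ ⟨X, ⟨S, hS⟩, rfl⟩
        refine ⟨S * U, ?_⟩
        rw [Matrix.mul_assoc, ← Matrix.mul_assoc U U', hUU', Matrix.one_mul, hS]
      have hcont : Continuous (fun X : Matrix ρ κ D => U' * X) :=
        continuous_const.matrix_mul continuous_id
      have h1 : T₁ ∈ (fun X : Matrix ρ κ D => U' * X) '' closure LI :=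
        ⟨U * T₁, hT₂mem, hT₁eq.symm⟩
      exact closure_mono himg (image_closure_subset_closure_image hcont h1)
    intro T
    have hTCert : T ∈ closure Cert := by
      refine (Metric.mem_closure_iff (α := ρ → κ → D)).mpr ?_
      intro ε hε
      obtain ⟨v', c, hc0, hv'off, hsum, hdist⟩ := lg_embed hq e (fun i => T i j₀) hε
      refine ⟨Matrix.of fun i j => if j = j₀ then v' i else T i j, ⟨c, hc0 p hep, ?_⟩, ?_⟩
      · have hrw : (∑ i, c i * (Matrix.of fun i j =>
            if j = j₀ then v' i else T i j) i j₀) = ∑ i, c i * v' i :=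
          Finset.sum_congr rfl fun i _ => by rw [Matrix.of_apply, if_pos rfl]
        rw [hrw]
        exact hsum
      · refine (dist_pi_lt_iff hε).mpr ?_
        intro i
        rw [dist_pi_lt_iff hε]
        intro j
        by_cases hj : j = j₀
        · rw [hj, Matrix.of_apply, if_pos rfl]
          have := (dist_pi_lt_iff hε).mp hdist i
          rw [dist_comm] at this
          exact this
        · rw [Matrix.of_apply, if_neg hj, dist_self]
          exact hε
    exact closure_minimal hCert isClosed_closure hTCert


lemma exists_lg_of_ltsr_le {D : Type*} [Ring D] [TopologicalSpace D] {K : ℕ}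
    (h : ltsr D ≤ (K : ℕ∞)) : ∃ q : ℕ, q ≤ K ∧ Dense (Lg D q) := by
  by_contra hcon
  push_neg at hcon
  have hlb : ((K + 1 : ℕ) : ℕ∞) ≤ ltsr D := by
    apply le_sInf
    rintro x ⟨q, hqd, rfl⟩
    have hKq : K < q := by
      by_contra hq
      push_neg at hq
      exact (hcon q hq) hqd
    show ((K + 1 : ℕ) : ℕ∞) ≤ ((q : ℕ) : ℕ∞)
    exact_mod_cast hKq
  have hKK : ((K + 1 : ℕ) : ℕ∞) ≤ ((K : ℕ) : ℕ∞) := le_trans hlb h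
  rw [Nat.cast_le] at hKK
  omega


lemma lg_two_of_LI {D : Type*} [NormedRing D] (n : ℕ)
    (hLI : Dense {T : Matrix (Fin 2 × Fin n) (Fin n) D |
      ∃ S : Matrix (Fin n) (Fin 2 × Fin n) D, S * T = 1}) :
    Dense (Lg (Matrix (Fin n) (Fin n) D) 2) := by
  let Φ : (Fin 2 → Matrix (Fin n) (Fin n) D) ≃ₜ
      Matrix (Fin 2 × Fin n) (Fin n) D :=
    { toFun := fun v => Matrix.of fun ki j => v ki.1 ki.2 j
      invFun := fun T k i j => T (k, i) j
      left_inv := fun v => rfl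
      right_inv := fun T => rfl
      continuous_toFun := by
        apply continuous_pi
        intro ki
        apply continuous_pi
        intro j
        have h1 : Continuous fun v : Fin 2 → Matrix (Fin n) (Fin n) D => v ki.1 :=
          continuous_apply _
        have h2 : Continuous fun m : Matrix (Fin n) (Fin n) D => m ki.2 j :=
          (continuous_apply j).comp (continuous_apply ki.2)
        exact h2.comp h1
      continuous_invFun := by
        apply continuous_pi
        intro k
        apply continuous_pi
        intro i
        apply continuous_pi
        intro j
        have h1 : Continuous fun T : Matrix (Fin 2 × Fin n) (Fin n) D => T (k, i) :=
          continuous_apply _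
        exact (continuous_apply j).comp h1 }
  have key : ∀ (c v : Fin 2 → Matrix (Fin n) (Fin n) D) (i j : Fin n),
      (∑ k : Fin 2, c k * v k) i j
        = ∑ kl : Fin 2 × Fin n, c kl.1 i kl.2 * v kl.1 kl.2 j := by
    intro c v i j
    rw [Matrix.sum_apply, Fintype.sum_prod_type]
    refine Finset.sum_congr rfl fun k _ => ?_
    rw [Matrix.mul_apply]
  have hpre : Lg (Matrix (Fin n) (Fin n) D) 2
      = Φ ⁻¹' {T : Matrix (Fin 2 × Fin n) (Fin n) D |
          ∃ S : Matrix (Fin n) (Fin 2 × Fin n) D, S * T = 1} := by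
    ext v
    simp only [Set.mem_preimage, Set.mem_setOf_eq, Lg]
    constructor
    · rintro ⟨c, hc⟩
      refine ⟨Matrix.of fun (i : Fin n) (kl : Fin 2 × Fin n) => c kl.1 i kl.2, ?_⟩
      ext i j
      rw [Matrix.mul_apply]
      have h2 : (∑ kl : Fin 2 × Fin n, c kl.1 i kl.2 * v kl.1 kl.2 j)
          = (1 : Matrix (Fin n) (Fin n) D) i j := by
        rw [← key c v i j, hc]
      exact h2
    · rintro ⟨S, hS⟩
      have hS' : S * (Matrix.of fun (ki : Fin 2 × Fin n) (j : Fin n) =>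
        v ki.1 ki.2 j) = 1 := hS
      refine ⟨fun k => Matrix.of fun (i l : Fin n) => S i (k, l), ?_⟩
      ext i j
      rw [key]
      have h2 := congrFun (congrFun hS' i) j
      rw [Matrix.mul_apply] at h2
      exact h2
  rw [hpre]
  exact hLI.preimage Φ.isOpenMap

lemma lg_transfer {A R : Type*} [Ring A] [TopologicalSpace A] [Ring R]
    [TopologicalSpace R] (e : A ≃+* R) (hc : Continuous e)
    (hc' : Continuous e.symm) {k : ℕ} (hd : Dense (Lg R k)) : Dense (Lg A k) := by
  let hA : A ≃ₜ R := ⟨e.toEquiv, hc, hc'⟩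
  let Ψ : (Fin k → A) ≃ₜ (Fin k → R) := Homeomorph.piCongrRight fun _ => hA
  have hpre : Lg A k = Ψ ⁻¹' (Lg R k) := by
    ext v
    have hmem : v ∈ Ψ ⁻¹' (Lg R k) ↔ ∃ c : Fin k → R, ∑ i, c i * e (v i) = 1 :=
      Iff.rfl
    rw [hmem]
    constructor
    · rintro ⟨c, hcsum⟩
      refine ⟨fun i => e (c i), ?_⟩
      have h1 : (∑ i, e (c i) * e (v i)) = e (∑ i, c i * v i) := by
        rw [map_sum]
        exact Finset.sum_congr rfl fun i _ => (map_mul e _ _).symm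
      rw [h1, hcsum, map_one]
    · rintro ⟨c, hcsum⟩
      refine ⟨fun i => e.symm (c i), ?_⟩
      apply e.injective
      rw [map_one, map_sum]
      have h1 : (∑ i, e (e.symm (c i) * v i)) = ∑ i, c i * e (v i) :=
        Finset.sum_congr rfl fun i _ => by rw [map_mul, e.apply_symm_apply]
      rw [h1, hcsum]
  rw [hpre]
  exact hd.preimage Ψ.isOpenMap

end Lemmas

/-- A tsr boundedly divisible unital Banach algebra `A` (for some
`K > 0`, for every `m` there is `n ≥ m` with `A ≅ M_n(D)` and `tsr(D) ≤ K`) has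
`ltsr(A) ≤ 2`. -/
theorem stmt13 {A : Type u} [NormedRing A] [CompleteSpace A] (K : ℕ) (hK : 0 < K)
    (h : ∀ m : ℕ, ∃ n : ℕ, m ≤ n ∧ Nonempty (MatrixDecomp A n K)) :
    ltsr A ≤ 2 := by
  obtain ⟨n, hn, ⟨dec⟩⟩ := h K
  letI : NormedRing dec.D := dec.instD
  letI : CompleteSpace dec.D := dec.instDc
  obtain ⟨q, hqK, hqD⟩ := exists_lg_of_ltsr_le dec.tsr_le
  have hLI : Dense {T : Matrix (Fin 2 × Fin n) (Fin n) dec.D |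
      ∃ S : Matrix (Fin n) (Fin 2 × Fin n) dec.D, S * T = 1} := by
    apply LI_dense hqD n (Fin 2 × Fin n) (Fin n) (by simp)
    simp only [Fintype.card_prod, Fintype.card_fin]
    omega
  have hMat2 : Dense (Lg (Matrix (Fin n) (Fin n) dec.D) 2) := lg_two_of_LI n hLI
  have hA2 : Dense (Lg A 2) := lg_transfer dec.iso dec.cont dec.cont_symm hMat2
  apply sInf_le
  exact ⟨2, hA2, by norm_num⟩
end
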